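/- There exist absolute constants T > 0 and c > 0 such that for every N ≥ 1, if X_1, …, X_N are independent random variables each exponentially distributed with mean 1, X = (X_1, …, X_N), S = ∑_{i=1}^N X_i, and t > T/√N, then P( ‖X‖/S > t ) ≤ e^{−ctN}. -/

import Mathlib

open MeasureTheory ProbabilityTheory Real Set
open scoped ENNReal NNReal
set_option maxHeartbeats 1000000

namespace Stmt9Aux


noncomputable instance : IsProbabilityMeasure (expMeasure 1) :=
  isProbabilityMeasure_expMeasure one_pos

lemma expMeasure_one_eq :
    expMeasure 1 = volume.withDensity
      (fun x => ((Real.toNNReal (exponentialPDFReal 1 x) : ℝ≥0) : ℝ≥0∞)) := rfl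

lemma integrand_eq (g : ℝ → ℝ) :
    (fun x => (Real.toNNReal (exponentialPDFReal 1 x)) • g x)
      = Set.indicator (Ici 0) (fun x => exp (-x) * g x) := by
  funext x
  by_cases hx : 0 ≤ x
  · rw [Set.indicator_of_mem (mem_Ici.mpr hx)]
    simp only [exponentialPDFReal, gammaPDFReal, if_pos hx, NNReal.smul_def,
      Real.coe_toNNReal', smul_eq_mul]
    rw [max_eq_left (by positivity)]
    norm_num
  · rw [Set.indicator_of_notMem (by simpa using hx)]
    simp only [exponentialPDFReal, gammaPDFReal, if_neg hx, NNReal.smul_def, smul_eq_mul]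
    simp

lemma integral_expMeasure (g : ℝ → ℝ) :
    ∫ x, g x ∂(expMeasure 1) = ∫ x in Ioi 0, exp (-x) * g x := by
  rw [expMeasure_one_eq,
    integral_withDensity_eq_integral_smul
      ((measurable_exponentialPDFReal 1).real_toNNReal) g,
    integrand_eq g, integral_indicator measurableSet_Ici, integral_Ici_eq_integral_Ioi]

lemma integrable_expMeasure (g : ℝ → ℝ) (hg : Measurable g)
    (h : IntegrableOn (fun x => exp (-x) * g x) (Ioi 0)) : Integrable g (expMeasure 1) := by
  rw [expMeasure_one_eq,
    integrable_withDensity_iff_integrable_smul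
      ((measurable_exponentialPDFReal 1).real_toNNReal),
    integrand_eq g, integrable_indicator_iff measurableSet_Ici]
  rwa [IntegrableOn, Measure.restrict_congr_set Ioi_ae_eq_Ici] at h


lemma integral_exp_mul {c : ℝ} (hc : c < 1) :
    ∫ x, exp (c * x) ∂(expMeasure 1) = (1 - c)⁻¹ := by
  rw [integral_expMeasure]
  rw [setIntegral_congr_fun (g := fun x => x ^ ((1:ℝ)-1) * exp (-((1-c)*x)))
    measurableSet_Ioi (fun x _ => by
      rw [← Real.exp_add]; norm_num; ring_nf)]
  rw [integral_rpow_mul_exp_neg_mul_Ioi one_pos (by linarith), Real.Gamma_one]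
  norm_num

lemma integrable_exp_mul {c : ℝ} (hc : c < 1) :
    Integrable (fun x => exp (c * x)) (expMeasure 1) := by
  refine integrable_expMeasure _ (by fun_prop) ?_
  have := exp_neg_integrableOn_Ioi 0 (b := 1 - c) (by linarith)
  refine this.congr_fun (fun x _ => ?_) measurableSet_Ioi
  rw [← Real.exp_add]; ring_nf

lemma integral_sq : ∫ x, x ^ 2 ∂(expMeasure 1) = 2 := by
  rw [integral_expMeasure]
  rw [setIntegral_congr_fun (g := fun x => x ^ ((3:ℝ)-1) * exp (-(1*x)))
    measurableSet_Ioi (fun x hx => by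
      show rexp (-x) * x ^ 2 = x ^ ((3:ℝ)-1) * rexp (-(1*x))
      rw [show (3:ℝ)-1 = ((2:ℕ):ℝ) by norm_num, Real.rpow_natCast]
      ring_nf)]
  rw [integral_rpow_mul_exp_neg_mul_Ioi (by norm_num) one_pos]
  rw [show (3:ℝ) = ((2:ℕ):ℝ) + 1 by norm_num, Real.Gamma_nat_eq_factorial]
  norm_num

lemma integrable_sq : Integrable (fun x : ℝ => x ^ 2) (expMeasure 1) := by
  refine integrable_expMeasure _ (by fun_prop) ?_
  have := Real.GammaIntegral_convergent (s := 3) (by norm_num)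
  refine this.congr_fun (fun x hx => ?_) measurableSet_Ioi
  show rexp (-x) * x ^ ((3:ℝ)-1) = rexp (-x) * x ^ 2
  rw [show (3:ℝ)-1 = ((2:ℕ):ℝ) by norm_num, Real.rpow_natCast]




lemma exp_le_one_add_mul (y : ℝ) : exp y ≤ 1 + y * exp y := by
  have h := Real.add_one_le_exp (-y)
  have hp : exp (-y) * exp y = 1 := by rw [← Real.exp_add]; simp
  nlinarith [mul_le_mul_of_nonneg_right h (exp_pos y).le]

lemma sq_le_three_mul_exp {y : ℝ} (hy : 0 ≤ y) : y ^ 2 ≤ 3 * exp y := by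
  have h1 : exp y = exp (y/3) ^ 3 := by
    rw [← Real.exp_nat_mul]; congr 1; push_cast; ring
  have h2 : 1 + y/3 ≤ exp (y/3) := by linarith [Real.add_one_le_exp (y/3)]
  have h3 : (1 + y/3) ^ 3 ≤ exp (y/3) ^ 3 := by
    apply pow_le_pow_left₀ (by linarith) h2
  nlinarith

section bulk
variable {u : ℝ} (hu : 0 < u)

noncomputable def bb (u : ℝ) : ℝ := Real.sqrt u / 4
noncomputable def mu (u : ℝ) : ℝ := 16 / u
noncomputable def fB (u : ℝ) (x : ℝ) : ℝ := if 0 ≤ x ∧ x ≤ bb u then x ^ 2 else 0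

lemma fB_measurable : Measurable (fB u) := by
  apply Measurable.ite _ (by fun_prop) (by fun_prop)
  exact (measurableSet_Ici.inter measurableSet_Iic :
    MeasurableSet {x : ℝ | 0 ≤ x ∧ x ≤ bb u})

include hu in
lemma fB_pointwise (x : ℝ) : exp (mu u * fB u x) ≤ 1 + mu u * exp 1 * x ^ 2 := by
  have hmu : 0 < mu u := by unfold mu; positivity
  unfold fB
  split_ifs with h
  · have hb2 : mu u * bb u ^ 2 = 1 := by
      unfold mu bb
      rw [div_pow, Real.sq_sqrt hu.le]
      field_simp
      norm_num
    have hx2 : x ^ 2 ≤ bb u ^ 2 := by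
      apply pow_le_pow_left₀ h.1 h.2
    have hy1 : mu u * x ^ 2 ≤ 1 := by
      calc mu u * x ^ 2 ≤ mu u * bb u ^ 2 := by
            exact mul_le_mul_of_nonneg_left hx2 hmu.le
        _ = 1 := hb2
    calc exp (mu u * x ^ 2) ≤ 1 + (mu u * x ^ 2) * exp (mu u * x ^ 2) :=
          exp_le_one_add_mul _
      _ ≤ 1 + (mu u * x ^ 2) * exp 1 := by
          have := Real.exp_le_exp.mpr hy1
          have hnn : 0 ≤ mu u * x ^ 2 := by positivity
          nlinarith
      _ = 1 + mu u * exp 1 * x ^ 2 := by ring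
  · simpa using by positivity
include hu in
lemma fB_integrable :
    Integrable (fun x => exp (mu u * fB u x)) (expMeasure 1) := by
  have hR : Integrable (fun x : ℝ => 1 + mu u * exp 1 * x ^ 2) (expMeasure 1) :=
    (integrable_const 1).add (integrable_sq.const_mul _)
  refine hR.mono' ?_ (ae_of_all _ fun x => ?_)
  · exact ((fB_measurable.const_mul _).exp).aestronglyMeasurable
  · rw [Real.norm_eq_abs, abs_of_pos (exp_pos _)]
    exact fB_pointwise hu x

include hu in
lemma fB_mgf_bound :
    ∫ x, exp (mu u * fB u x) ∂(expMeasure 1) ≤ 1 + 2 * exp 1 * mu u := by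
  have hR : Integrable (fun x : ℝ => 1 + mu u * exp 1 * x ^ 2) (expMeasure 1) :=
    (integrable_const 1).add (integrable_sq.const_mul _)
  calc ∫ x, exp (mu u * fB u x) ∂(expMeasure 1)
      ≤ ∫ x, (1 + mu u * exp 1 * x ^ 2) ∂(expMeasure 1) :=
        integral_mono (fB_integrable hu) hR (fun x => fB_pointwise hu x)
    _ = 1 + 2 * exp 1 * mu u := by
        rw [integral_add (integrable_const 1) (integrable_sq.const_mul _),
          integral_const, integral_const_mul, integral_sq]
        simp [measure_univ]
        ring
end bulk

section tail
variable {u : ℝ} (hu : 0 < u)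

noncomputable def fC (u : ℝ) (x : ℝ) : ℝ := if bb u < x then x else 0

lemma fC_measurable : Measurable (fC u) := by
  apply Measurable.ite _ (by fun_prop) (by fun_prop)
  exact (measurableSet_Ioi : MeasurableSet {x : ℝ | bb u < x})

lemma fC_nonneg (hu : 0 < u) (x : ℝ) : 0 ≤ fC u x := by
  have hb : 0 ≤ bb u := by unfold bb; positivity
  unfold fC; split_ifs with h
  · linarith
  · exact le_refl 0

lemma fC_pointwise (hu : 0 < u) (x : ℝ) :
    exp ((1/2) * fC u x) ≤ 1 + exp (-(bb u / 4)) * exp ((3/4) * x) := by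
  unfold fC
  split_ifs with h
  · rw [← Real.exp_add]
    calc exp ((1/2) * x) ≤ exp (-(bb u / 4) + (3/4) * x) := by
          apply Real.exp_le_exp.mpr; linarith
      _ ≤ 1 + exp (-(bb u / 4) + (3/4) * x) := by linarith [exp_pos (-(bb u / 4) + (3/4) * x)]
  · simpa using by positivity

lemma fC_integrable (hu : 0 < u) :
    Integrable (fun x => exp ((1/2) * fC u x)) (expMeasure 1) := by
  have hR : Integrable (fun x : ℝ => 1 + exp (-(bb u / 4)) * exp ((3/4) * x)) (expMeasure 1) :=
    (integrable_const 1).add ((integrable_exp_mul (by norm_num)).const_mul _)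
  refine hR.mono' ((fC_measurable.const_mul _).exp).aestronglyMeasurable
    (ae_of_all _ fun x => ?_)
  rw [Real.norm_eq_abs, abs_of_pos (exp_pos _)]
  exact fC_pointwise hu x

lemma fC_mgf_bound (hu : 0 < u) :
    ∫ x, exp ((1/2) * fC u x) ∂(expMeasure 1) ≤ 1 + 4 * exp (-(bb u / 4)) := by
  have hR : Integrable (fun x : ℝ => 1 + exp (-(bb u / 4)) * exp ((3/4) * x)) (expMeasure 1) :=
    (integrable_const 1).add ((integrable_exp_mul (by norm_num)).const_mul _)
  calc ∫ x, exp ((1/2) * fC u x) ∂(expMeasure 1)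
      ≤ ∫ x, (1 + exp (-(bb u / 4)) * exp ((3/4) * x)) ∂(expMeasure 1) :=
        integral_mono (fC_integrable hu) hR (fun x => fC_pointwise hu x)
    _ = 1 + 4 * exp (-(bb u / 4)) := by
        rw [integral_add (integrable_const 1)
          ((integrable_exp_mul (by norm_num)).const_mul _),
          integral_const, integral_const_mul, integral_exp_mul (by norm_num)]
        simp [measure_univ]
        ring
end tail

lemma neg_mgf_eq : ∫ x, exp (1 * (-x)) ∂(expMeasure 1) = 1/2 := by
  have : (fun x : ℝ => exp (1 * (-x))) = fun x => exp ((-1) * x) := by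
    funext x; ring_nf
  rw [this, integral_exp_mul (by norm_num)]
  norm_num

lemma neg_mgf_integrable : Integrable (fun x : ℝ => exp (1 * (-x))) (expMeasure 1) := by
  have : (fun x : ℝ => exp (1 * (-x))) = fun x => exp ((-1) * x) := by
    funext x; ring_nf
  rw [this]; exact integrable_exp_mul (by norm_num)



lemma mgf_comp {Ω : Type} [MeasurableSpace Ω] {P : Measure Ω} {Y : Ω → ℝ} (hY : Measurable Y)
    (hmap : Measure.map Y P = expMeasure 1) (f : ℝ → ℝ) (hf : Measurable f) (l : ℝ) :
    mgf (f ∘ Y) P l = ∫ x, exp (l * f x) ∂(expMeasure 1) := by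
  rw [mgf, ← hmap, integral_map hY.aemeasurable (((hf.const_mul l).exp).aestronglyMeasurable)]
  rfl

lemma integrable_comp {Ω : Type} [MeasurableSpace Ω] {P : Measure Ω} {Y : Ω → ℝ}
    (hY : Measurable Y) (hmap : Measure.map Y P = expMeasure 1) (f : ℝ → ℝ) (hf : Measurable f)
    (l : ℝ) (h : Integrable (fun x => exp (l * f x)) (expMeasure 1)) :
    Integrable (fun ω => exp (l * f (Y ω))) P := by
  rw [← hmap] at h
  exact (integrable_map_measure (((hf.const_mul l).exp).aestronglyMeasurable) hY.aemeasurable).mp h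

lemma chernoff {N : ℕ} {Ω : Type} [MeasurableSpace Ω] (P : Measure Ω) [IsProbabilityMeasure P]
    (X : Fin N → Ω → ℝ) (hX : ∀ i, Measurable (X i))
    (hind : iIndepFun X P)
    (hmap : ∀ i, Measure.map (X i) P = expMeasure 1)
    (f : ℝ → ℝ) (hf : Measurable f) {l : ℝ} (hl : 0 ≤ l)
    (hint : Integrable (fun x => exp (l * f x)) (expMeasure 1))
    {B : ℝ} (hB : ∫ x, exp (l * f x) ∂(expMeasure 1) ≤ B)
    (r : ℝ) :
    P {ω | r ≤ ∑ i, f (X i ω)} ≤ ENNReal.ofReal (exp (-l * r) * B ^ N) := by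
  set Y : Fin N → Ω → ℝ := fun i => f ∘ X i with hYdef
  have hYmeas : ∀ i, Measurable (Y i) := fun i => hf.comp (hX i)
  have hindY : iIndepFun Y P := hind.comp (fun _ => f) (fun _ => hf)
  have hintY : ∀ i, Integrable (fun ω => exp (l * Y i ω)) P := fun i =>
    integrable_comp (hX i) (hmap i) f hf l hint
  have hsum : Integrable (fun ω => exp (l * (∑ i, Y i) ω)) P :=
    hindY.integrable_exp_mul_sum hYmeas (fun i _ => hintY i)
  have key := measure_ge_le_exp_mul_mgf (μ := P) (X := ∑ i, Y i) r hl hsum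
  have hmgf : mgf (∑ i, Y i) P l ≤ B ^ N := by
    rw [hindY.mgf_sum hYmeas]
    have hBnn : ∀ i : Fin N, i ∈ Finset.univ → mgf (Y i) P l ≤ B := fun i _ => by
      rw [hYdef]
      rw [mgf_comp (hX i) (hmap i) f hf l]
      exact hB
    calc ∏ i, mgf (Y i) P l ≤ ∏ _i : Fin N, B :=
          Finset.prod_le_prod (fun i _ => mgf_nonneg) hBnn
      _ = B ^ N := by rw [Finset.prod_const, Finset.card_univ, Fintype.card_fin]
  have hset : {ω | r ≤ ∑ i, f (X i ω)} = {ω | r ≤ (∑ i, Y i) ω} := by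
    ext ω; simp [hYdef, Finset.sum_apply]
  rw [hset]
  have hfin : P {ω | r ≤ (∑ i, Y i) ω} ≠ ⊤ := measure_ne_top _ _
  calc P {ω | r ≤ (∑ i, Y i) ω} = ENNReal.ofReal (P {ω | r ≤ (∑ i, Y i) ω}).toReal :=
        (ENNReal.ofReal_toReal hfin).symm
    _ ≤ ENNReal.ofReal (exp (-l * r) * B ^ N) := by
        refine ENNReal.ofReal_le_ofReal (key.trans ?_)
        exact mul_le_mul_of_nonneg_left hmgf (exp_pos _).le

lemma sum_sq_le_sq_sum {n : ℕ} (a : Fin n → ℝ) (h : ∀ i, 0 ≤ a i) :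
    ∑ i, (a i) ^ 2 ≤ (∑ i, a i) ^ 2 := by
  calc ∑ i, a i ^ 2 ≤ ∑ i, a i * ∑ j, a j :=
        Finset.sum_le_sum fun i _ => by
          rw [sq]
          exact mul_le_mul_of_nonneg_left
            (Finset.single_le_sum (fun j _ => h j) (Finset.mem_univ i)) (h i)
    _ = (∑ i, a i) ^ 2 := by rw [← Finset.sum_mul, sq]

lemma expMeasure_Iio_zero : expMeasure 1 (Iio 0) = 0 := by
  show (volume.withDensity (gammaPDF 1 1)) (Iio 0) = 0
  rw [withDensity_apply _ measurableSet_Iio]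
  exact lintegral_gammaPDF_of_nonpos le_rfl

end Stmt9Aux

open Stmt9Aux

theorem stmt9 :
    ∃ T > (0 : ℝ), ∃ c > (0 : ℝ),
      ∀ (N : ℕ), 1 ≤ N →
        ∀ (Ω : Type) (_ : MeasurableSpace Ω) (P : Measure Ω), IsProbabilityMeasure P →
          ∀ X : Fin N → Ω → ℝ,
            (∀ i, Measurable (X i)) →
            iIndepFun X P →
            (∀ i, Measure.map (X i) P = expMeasure 1) →
            ∀ t : ℝ, T / Real.sqrt N < t →
              P {ω | Real.sqrt (∑ i, X i ω ^ 2) / (∑ i, X i ω) > t} ≤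
                ENNReal.ofReal (Real.exp (-(c * t * N))) := by
  refine ⟨200, by norm_num, 1/24, by norm_num, ?_⟩
  intro N hN Ω mΩ P hP X hX hind hmap t ht
  haveI := hP
  -- basic facts
  have hsqrtN : (1:ℝ) ≤ Real.sqrt N := by
    rw [show (1:ℝ) = Real.sqrt 1 by simp]
    exact Real.sqrt_le_sqrt (by exact_mod_cast hN)
  have hsqrtN0 : (0:ℝ) < Real.sqrt N := by linarith
  have ht0 : 0 < t := lt_trans (by positivity) ht
  have htsq : 200 < t * Real.sqrt N := by
    rw [div_lt_iff₀ hsqrtN0] at ht; linarith [ht]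
  set u : ℝ := t * N with hu_def
  have hNsq : (N:ℝ) = Real.sqrt N * Real.sqrt N := (Real.mul_self_sqrt (by positivity)).symm
  have hu200sqrt : 200 * Real.sqrt N < u := by
    calc 200 * Real.sqrt N < (t * Real.sqrt N) * Real.sqrt N := by
          exact mul_lt_mul_of_pos_right htsq hsqrtN0
      _ = t * (Real.sqrt N * Real.sqrt N) := by ring
      _ = u := by rw [← hNsq]
  have hu200 : 200 < u := by
    calc (200:ℝ) ≤ 200 * Real.sqrt N := by linarith
      _ < u := hu200sqrt
  have hu0 : 0 < u := by linarith
  have huN : u ^ 2 > 40000 * N := by nlinarith [hu200sqrt, hsqrtN0, hNsq]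
  -- the bad (negative) set is null
  have hnull : P {ω | ∃ i, X i ω < 0} = 0 := by
    rw [Set.setOf_exists]
    refine measure_iUnion_null fun i => ?_
    have : {ω | X i ω < 0} = X i ⁻¹' (Iio 0) := rfl
    rw [this, ← Measure.map_apply (hX i) measurableSet_Iio, hmap i]
    exact expMeasure_Iio_zero
  set E := {ω | Real.sqrt (∑ i, X i ω ^ 2) / (∑ i, X i ω) > t} with hE_def
  by_cases htlt : 1 ≤ t
  · -- trivial case : event is a.s. empty
    have hsub : E ⊆ {ω | ∃ i, X i ω < 0} := by
      intro ω hω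
      by_contra hcon
      simp only [Set.mem_setOf_eq, not_exists, not_lt] at hcon
      have hnn : ∀ i, 0 ≤ X i ω := hcon
      have hq0 : 0 ≤ ∑ i, X i ω ^ 2 := Finset.sum_nonneg fun i _ => sq_nonneg _
      have hS0 : 0 ≤ ∑ i, X i ω := Finset.sum_nonneg fun i _ => hnn i
      have hE' : Real.sqrt (∑ i, X i ω ^ 2) / (∑ i, X i ω) > t := hω
      rcases eq_or_lt_of_le hS0 with hS | hS
      · rw [← hS, div_zero] at hE'; linarith
      · have hle : Real.sqrt (∑ i, X i ω ^ 2) ≤ ∑ i, X i ω := by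
          calc Real.sqrt (∑ i, X i ω ^ 2) ≤ Real.sqrt ((∑ i, X i ω) ^ 2) :=
                Real.sqrt_le_sqrt (sum_sq_le_sq_sum _ hnn)
            _ = ∑ i, X i ω := Real.sqrt_sq hS0
        have : Real.sqrt (∑ i, X i ω ^ 2) / (∑ i, X i ω) ≤ 1 :=
          (div_le_one hS).mpr hle
        linarith
    calc P E ≤ P {ω | ∃ i, X i ω < 0} := measure_mono hsub
      _ = 0 := hnull
      _ ≤ _ := zero_le
  · push_neg at htlt
    have hNu : u ≤ (N:ℝ) := by
      have h1 : (1:ℝ) ≤ (N:ℝ) := by exact_mod_cast hN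
      rw [hu_def]; nlinarith
    -- three chernoff events
    set SA := {ω | -((N:ℝ)/2) ≤ ∑ i, (fun x : ℝ => -x) (X i ω)} with hSA_def
    set SB := {ω | u^2/8 ≤ ∑ i, fB u (X i ω)} with hSB_def
    set SC := {ω | u/3 ≤ ∑ i, fC u (X i ω)} with hSC_def
    have hmu0 : 0 < mu u := by unfold mu; positivity
    have hPA : P SA ≤ ENNReal.ofReal (exp (-1 * -((N:ℝ)/2)) * (1/2:ℝ) ^ N) :=
      chernoff P X hX hind hmap _ (by fun_prop) zero_le_one
        neg_mgf_integrable (le_of_eq neg_mgf_eq) _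
    have hPB : P SB ≤ ENNReal.ofReal (exp (-(mu u) * (u^2/8)) * (1 + 2 * exp 1 * mu u) ^ N) :=
      chernoff P X hX hind hmap _ fB_measurable hmu0.le
        (fB_integrable hu0) (fB_mgf_bound hu0) _
    have hPC : P SC ≤ ENNReal.ofReal (exp (-(1/2) * (u/3)) * (1 + 4 * exp (-(bb u / 4))) ^ N) :=
      chernoff P X hX hind hmap _ fC_measurable (by norm_num)
        (fC_integrable hu0) (fC_mgf_bound hu0) _
    -- inclusion
    have hincl : E ⊆ {ω | ∃ i, X i ω < 0} ∪ (SA ∪ (SB ∪ SC)) := by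
      intro ω hω
      by_cases hneg : ∃ i, X i ω < 0
      · exact Or.inl hneg
      push_neg at hneg
      refine Or.inr ?_
      by_cases hA : ω ∈ SA
      · exact Or.inl hA
      refine Or.inr ?_
      rw [hSA_def, Set.mem_setOf_eq, not_le] at hA
      have hSsum : ∑ i, (fun x : ℝ => -x) (X i ω) = -(∑ i, X i ω) := by
        simp [Finset.sum_neg_distrib]
      rw [hSsum] at hA
      set S := ∑ i, X i ω with hSdef
      have hS : (N:ℝ)/2 < S := by linarith
      have hS0 : 0 < S := by
        have : (0:ℝ) < (N:ℝ)/2 := by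
          have : (1:ℝ) ≤ (N:ℝ) := by exact_mod_cast hN
          linarith
        linarith
      set q := ∑ i, X i ω ^ 2 with hqdef
      have hq0 : 0 ≤ q := Finset.sum_nonneg fun i _ => sq_nonneg _
      have hE' : t < Real.sqrt q / S := hω
      have hsq : t * S < Real.sqrt q := (lt_div_iff₀ hS0).mp hE'
      have hq : (t*S)^2 < q :=
        (Real.lt_sqrt (mul_nonneg ht0.le hS0.le)).mp hsq
      have hq2 : u^2/4 < q := by
        have h1 : u^2/4 < (t*S)^2 := by
          rw [hu_def]
          have : t * ((N:ℝ)/2) < t * S := mul_lt_mul_of_pos_left hS ht0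
          nlinarith
        linarith
      have hdecomp : q = (∑ i, fB u (X i ω)) + ∑ i, (fC u (X i ω))^2 := by
        rw [hqdef, ← Finset.sum_add_distrib]
        refine Finset.sum_congr rfl fun i _ => ?_
        by_cases hbi : bb u < X i ω
        · have e1 : fB u (X i ω) = 0 := by
            unfold fB; rw [if_neg]; push_neg; exact fun _ => hbi
          have e2 : fC u (X i ω) = X i ω := by unfold fC; rw [if_pos hbi]
          rw [e1, e2]; ring
        · have e1 : fB u (X i ω) = X i ω ^ 2 := by
            unfold fB; rw [if_pos ⟨hneg i, not_lt.mp hbi⟩]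
          have e2 : fC u (X i ω) = 0 := by unfold fC; rw [if_neg hbi]
          rw [e1, e2]; ring
      by_cases hB : ω ∈ SB
      · exact Or.inl hB
      refine Or.inr ?_
      rw [hSB_def, Set.mem_setOf_eq, not_le] at hB
      have hfc2 : u^2/8 < ∑ i, (fC u (X i ω))^2 := by
        rw [hdecomp] at hq2; linarith
      have hV2 : ∑ i, (fC u (X i ω))^2 ≤ (∑ i, fC u (X i ω))^2 :=
        sum_sq_le_sq_sum _ (fun i => fC_nonneg hu0 _)
      show u/3 ≤ ∑ i, fC u (X i ω)
      have hV0 : 0 ≤ ∑ i, fC u (X i ω) := Finset.sum_nonneg fun i _ => fC_nonneg hu0 _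
      nlinarith
    -- combine measures
    have hPE : P E ≤ P SA + P SB + P SC := by
      calc P E ≤ P ({ω | ∃ i, X i ω < 0} ∪ (SA ∪ (SB ∪ SC))) := measure_mono hincl
        _ ≤ P {ω | ∃ i, X i ω < 0} + P (SA ∪ (SB ∪ SC)) := measure_union_le _ _
        _ = P (SA ∪ (SB ∪ SC)) := by rw [hnull, zero_add]
        _ ≤ P SA + P (SB ∪ SC) := measure_union_le _ _
        _ ≤ P SA + (P SB + P SC) := by
            exact add_le_add le_rfl (measure_union_le _ _)
        _ = P SA + P SB + P SC := by rw [add_assoc]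
    -- numeric bounds
    have he3 : exp 1 ≤ 3 := by linarith [Real.exp_one_lt_d9.le]
    have hx1 : exp (-1 * -((N:ℝ)/2)) * (1/2:ℝ) ^ N ≤ exp (-(u/12)) := by
      have hbase : (1/2:ℝ) ≤ exp (-(7/12)) := by
        rw [show (1/2:ℝ) = (2:ℝ)⁻¹ by norm_num, ← Real.exp_log (by norm_num : (0:ℝ) < 2),
          ← Real.exp_neg]
        apply Real.exp_le_exp.mpr
        have := Real.log_two_gt_d9
        linarith
      have hpow : (1/2:ℝ) ^ N ≤ exp (-(7/12)) ^ N :=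
        pow_le_pow_left₀ (by norm_num) hbase N
      rw [← Real.exp_nat_mul] at hpow
      calc exp (-1 * -((N:ℝ)/2)) * (1/2:ℝ) ^ N ≤ exp ((N:ℝ)/2) * exp ((N:ℝ) * -(7/12)) := by
            rw [show (-1 : ℝ) * -((N:ℝ)/2) = (N:ℝ)/2 by ring]
            exact mul_le_mul_of_nonneg_left hpow (exp_pos _).le
        _ = exp ((N:ℝ)/2 + (N:ℝ) * -(7/12)) := by rw [← Real.exp_add]
        _ ≤ exp (-(u/12)) := by
            apply Real.exp_le_exp.mpr
            have : (N:ℝ)/2 + (N:ℝ) * -(7/12) = -((N:ℝ)/12) := by ring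
            rw [this]
            linarith
    have hx2 : exp (-(mu u) * (u^2/8)) * (1 + 2 * exp 1 * mu u) ^ N ≤ exp (-(u/12)) := by
      have hexp1 : -(mu u) * (u^2/8) = -(2*u) := by
        unfold mu; field_simp; ring
      have hy : (0:ℝ) ≤ 2 * exp 1 * mu u := by positivity
      have hb1 : 1 + 2 * exp 1 * mu u ≤ exp (2 * exp 1 * mu u) := by
        have := Real.add_one_le_exp (2 * exp 1 * mu u); linarith
      have hpow : (1 + 2 * exp 1 * mu u) ^ N ≤ exp ((N:ℝ) * (2 * exp 1 * mu u)) := by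
        rw [Real.exp_nat_mul]
        exact pow_le_pow_left₀ (by linarith) hb1 N
      have hsmall : (N:ℝ) * (2 * exp 1 * mu u) ≤ u := by
        unfold mu
        rw [show (N:ℝ) * (2 * exp 1 * (16/u)) = 32 * exp 1 * N / u by ring]
        rw [div_le_iff₀ hu0]
        nlinarith
      calc exp (-(mu u) * (u^2/8)) * (1 + 2 * exp 1 * mu u) ^ N
          ≤ exp (-(2*u)) * exp ((N:ℝ) * (2 * exp 1 * mu u)) := by
            rw [hexp1]
            exact mul_le_mul_of_nonneg_left hpow (exp_pos _).le
        _ = exp (-(2*u) + (N:ℝ) * (2 * exp 1 * mu u)) := by rw [← Real.exp_add]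
        _ ≤ exp (-(u/12)) := by
            apply Real.exp_le_exp.mpr
            linarith
    have hx3 : exp (-(1/2) * (u/3)) * (1 + 4 * exp (-(bb u / 4))) ^ N ≤ exp (-(u/12)) := by
      have hbbval : bb u / 4 = Real.sqrt u / 16 := by unfold bb; ring
      set y := Real.sqrt u / 16 with hydef
      have hy0 : 0 < y := by
        rw [hydef]; positivity
      have hysq : y^2 = u / 256 := by
        rw [hydef, div_pow, Real.sq_sqrt hu0.le]; norm_num
      have hexpy : exp (-y) ≤ 768 / u := by
        have h1' : u / 256 ≤ 3 * exp y := by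
          rw [← hysq]; exact sq_le_three_mul_exp hy0.le
        have h2 := mul_le_mul_of_nonneg_right h1' (exp_pos (-y)).le
        have hprod : exp y * exp (-y) = 1 := by rw [← Real.exp_add]; simp
        rw [le_div_iff₀ hu0]
        nlinarith [exp_pos (-y)]
      have hterm : 4 * (N:ℝ) * exp (-(bb u / 4)) ≤ u / 12 := by
        rw [hbbval]
        calc 4 * (N:ℝ) * exp (-y) ≤ 4 * (N:ℝ) * (768/u) := by
              apply mul_le_mul_of_nonneg_left hexpy (by positivity)
          _ ≤ u / 12 := by
              rw [show 4 * (N:ℝ) * (768/u) = 3072 * N / u by ring, div_le_div_iff₀ hu0 (by norm_num)]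
              nlinarith
      have hb1 : 1 + 4 * exp (-(bb u / 4)) ≤ exp (4 * exp (-(bb u / 4))) := by
        have := Real.add_one_le_exp (4 * exp (-(bb u / 4))); linarith
      have hpow : (1 + 4 * exp (-(bb u / 4))) ^ N ≤ exp ((N:ℝ) * (4 * exp (-(bb u / 4)))) := by
        rw [Real.exp_nat_mul]
        exact pow_le_pow_left₀ (by positivity) hb1 N
      calc exp (-(1/2) * (u/3)) * (1 + 4 * exp (-(bb u / 4))) ^ N
          ≤ exp (-(1/2) * (u/3)) * exp ((N:ℝ) * (4 * exp (-(bb u / 4)))) :=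
            mul_le_mul_of_nonneg_left hpow (exp_pos _).le
        _ = exp (-(1/2) * (u/3) + (N:ℝ) * (4 * exp (-(bb u / 4)))) := by rw [← Real.exp_add]
        _ ≤ exp (-(u/12)) := by
            apply Real.exp_le_exp.mpr
            have : (N:ℝ) * (4 * exp (-(bb u / 4))) = 4 * (N:ℝ) * exp (-(bb u / 4)) := by ring
            rw [this]
            linarith
    have hsum3 : exp (-(u/12)) + exp (-(u/12)) + exp (-(u/12)) ≤ exp (-(1/24 * t * N)) := by
      have : -(1/24 * t * (N:ℝ)) = -(u/24) := by rw [hu_def]; ring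
      rw [this]
      have h3 : (3:ℝ) ≤ exp (u/24) := by
        have := Real.add_one_le_exp (u/24)
        linarith
      have : 3 * exp (-(u/12)) ≤ exp (-(u/24)) := by
        rw [show -(u/12) = -(u/24) + -(u/24) by ring, Real.exp_add]
        calc 3 * (exp (-(u/24)) * exp (-(u/24))) ≤ exp (u/24) * (exp (-(u/24)) * exp (-(u/24))) := by
              apply mul_le_mul_of_nonneg_right h3 (by positivity)
          _ = exp (-(u/24)) := by
              rw [← Real.exp_add, ← Real.exp_add]
              congr 1
              ring
      linarith
    calc P E ≤ P SA + P SB + P SC := hPE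
      _ ≤ ENNReal.ofReal (exp (-1 * -((N:ℝ)/2)) * (1/2:ℝ) ^ N)
          + ENNReal.ofReal (exp (-(mu u) * (u^2/8)) * (1 + 2 * exp 1 * mu u) ^ N)
          + ENNReal.ofReal (exp (-(1/2) * (u/3)) * (1 + 4 * exp (-(bb u / 4))) ^ N) := by
            exact add_le_add (add_le_add hPA hPB) hPC
      _ ≤ ENNReal.ofReal (exp (-(u/12))) + ENNReal.ofReal (exp (-(u/12)))
          + ENNReal.ofReal (exp (-(u/12))) := by
            exact add_le_add (add_le_add (ENNReal.ofReal_le_ofReal hx1)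
              (ENNReal.ofReal_le_ofReal hx2)) (ENNReal.ofReal_le_ofReal hx3)
      _ ≤ ENNReal.ofReal (exp (-(u/12)) + exp (-(u/12)) + exp (-(u/12))) := by
            rw [← ENNReal.ofReal_add (exp_pos _).le (exp_pos _).le,
              ← ENNReal.ofReal_add (by positivity) (exp_pos _).le]
      _ ≤ ENNReal.ofReal (exp (-(1/24 * t * N))) := ENNReal.ofReal_le_ofReal hsum3
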